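/- Let d ≥ 2 and let a be a real number with −1/(d²−1) ≤ a ≤ 1/(d+1). Then the depolarizing channel Γ_a on d×d matrices is entanglement breaking: for every density matrix ρ on ℂ^d ⊗ ℂ^d, the matrix (id ⊗ Γ_a)(ρ) is separable, i.e., it is a finite convex combination Σ_i p_i σ_i ⊗ τ_i of tensor products of density matrices σ_i, τ_i on ℂ^d. -/

import Mathlib

open scoped BigOperators Matrix Kronecker ComplexOrder

noncomputable section

namespace GenDep

/-- A density matrix: positive semidefinite with trace 1. -/
def IsDensityMatrix {ι : Type*} [Fintype ι] (ρ : Matrix ι ι ℂ) : Prop :=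
  ρ.PosSemidef ∧ ρ.trace = 1

/-- A unitary matrix. -/
def IsUnitary {ι : Type*} [Fintype ι] [DecidableEq ι] (V : Matrix ι ι ℂ) : Prop :=
  Vᴴ * V = 1 ∧ V * Vᴴ = 1

/-- The depolarizing channel with parameter `a` on `d × d` matrices. -/
def depolarizing (d : ℕ) (a : ℝ) (ρ : Matrix (Fin d) (Fin d) ℂ) :
    Matrix (Fin d) (Fin d) ℂ :=
  (a : ℂ) • ρ + ((((1 : ℝ) - a : ℝ) : ℂ) / d * ρ.trace) • 1

/-- The Schatten `p`-norm, `(Tr ((AᴴA)^(p/2)))^(1/p)`, computed via the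
eigenvalues of `AᴴA`. -/
def schattenNorm {ι : Type*} [Fintype ι] [DecidableEq ι] (p : ℝ) (A : Matrix ι ι ℂ) : ℝ :=
  (∑ i, ((Matrix.isHermitian_conjTranspose_mul_self A).eigenvalues i) ^ (p / 2)) ^ (1 / p)

/-- The maximal output `p`-norm of a map on matrices. -/
def maxOutputPNorm {ι : Type*} [Fintype ι] [DecidableEq ι] (p : ℝ)
    (Φ : Matrix ι ι ℂ → Matrix ι ι ℂ) : ℝ :=
  sSup {x | ∃ ρ, IsDensityMatrix ρ ∧ x = schattenNorm p (Φ ρ)}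

/-- The von Neumann entropy `-Tr (ρ log ρ)` (natural log, `0 log 0 = 0`),
computed via eigenvalues. -/
def vNEntropy {ι : Type*} [Fintype ι] [DecidableEq ι] (ρ : Matrix ι ι ℂ) : ℝ :=
  if h : ρ.IsHermitian then -∑ i, (h.eigenvalues i) * Real.log (h.eigenvalues i) else 0

/-- The minimal output entropy of a map on matrices. -/
def minOutputEntropy {ι : Type*} [Fintype ι] [DecidableEq ι]
    (Φ : Matrix ι ι ℂ → Matrix ι ι ℂ) : ℝ :=
  sInf {x | ∃ ρ, IsDensityMatrix ρ ∧ x = vNEntropy (Φ ρ)}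

/-- The tensor product `Φ ⊗ Ω` of two superoperators, acting on matrices over the
product index set (Kronecker product structure). -/
def tensorMap {ι κ : Type*} [Fintype ι] [DecidableEq ι] [Fintype κ]
    (Φ : Matrix ι ι ℂ → Matrix ι ι ℂ) (Ω : Matrix κ κ ℂ → Matrix κ κ ℂ)
    (ρ : Matrix (ι × κ) (ι × κ) ℂ) : Matrix (ι × κ) (ι × κ) ℂ :=
  ∑ i : ι, ∑ k : ι,
    (Φ (Matrix.single i k 1)) ⊗ₖ (Ω (Matrix.of fun j l => ρ (i, j) (k, l)))

/-- Complete positivity of a map on `d × d` matrices: `id ⊗ Φ` preserves positive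
semidefiniteness on every extended space. -/
def IsCompletelyPositive {d : ℕ}
    (Φ : Matrix (Fin d) (Fin d) ℂ → Matrix (Fin d) (Fin d) ℂ) : Prop :=
  ∀ n : ℕ, ∀ ρ : Matrix (Fin n × Fin d) (Fin n × Fin d) ℂ, ρ.PosSemidef →
    (tensorMap (id : Matrix (Fin n) (Fin n) ℂ → Matrix (Fin n) (Fin n) ℂ) Φ ρ).PosSemidef

/-- A channel: a completely positive trace-preserving linear map. -/
structure IsChannel {d : ℕ}
    (Φ : Matrix (Fin d) (Fin d) ℂ → Matrix (Fin d) (Fin d) ℂ) : Prop where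
  map_add : ∀ A B, Φ (A + B) = Φ A + Φ B
  map_smul : ∀ (c : ℂ) A, Φ (c • A) = c • Φ A
  trace_preserving : ∀ A, (Φ A).trace = A.trace
  cp : IsCompletelyPositive Φ

/-- The Holevo capacity of a map on matrices: the supremum over finite ensembles of
the Holevo quantity. -/
def holevoCapacity {d : ℕ}
    (Φ : Matrix (Fin d) (Fin d) ℂ → Matrix (Fin d) (Fin d) ℂ) : ℝ :=
  sSup {x | ∃ (m : ℕ) (w : Fin m → ℝ) (ρ : Fin m → Matrix (Fin d) (Fin d) ℂ),
    (∀ j, 0 < w j) ∧ (∑ j, w j = 1) ∧ (∀ j, IsDensityMatrix (ρ j)) ∧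
    x = vNEntropy (Φ (∑ j, (w j : ℂ) • ρ j)) - ∑ j, w j * vNEntropy (Φ (ρ j))}

/-- The matrix logarithm of a Hermitian matrix, via the spectral theorem, with the
convention `log 0 = 0` on the kernel (i.e. on the support for PSD matrices). -/
def matLog {ι : Type*} [Fintype ι] [DecidableEq ι] (A : Matrix ι ι ℂ) : Matrix ι ι ℂ :=
  if h : A.IsHermitian then
    (Matrix.IsHermitian.eigenvectorUnitary h : Matrix ι ι ℂ) *
      Matrix.diagonal (fun i => (Real.log (h.eigenvalues i) : ℂ)) *
      (star (Matrix.IsHermitian.eigenvectorUnitary h : Matrix ι ι ℂ))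
  else 0

/-- Real-valued quantum relative entropy `H(ρ, γ) = Tr ρ (log ρ - log γ)`. -/
def relEntropyR {ι : Type*} [Fintype ι] [DecidableEq ι] (ρ γ : Matrix ι ι ℂ) : ℝ :=
  (Matrix.trace (ρ * (matLog ρ - matLog γ))).re

open Classical in
/-- Extended-real-valued quantum relative entropy, `+∞` when the support condition
`ker γ ⊆ ker ρ` fails. -/
def relEntropy {ι : Type*} [Fintype ι] [DecidableEq ι] (ρ γ : Matrix ι ι ℂ) : EReal :=
  if ∀ x : ι → ℂ, γ.mulVec x = 0 → ρ.mulVec x = 0 then ((relEntropyR ρ γ : ℝ) : EReal)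
  else ⊤

end GenDep

namespace EB
open GenDep


open Complex Matrix

/-- sum of powers of a 4th root of unity -/
lemma foursum (z : ℂ) (hz : z ^ 4 = 1) :
    ∑ t : Fin 4, z ^ (t : ℕ) = if z = 1 then 4 else 0 := by
  rw [Fin.sum_univ_eq_sum_range (fun n => z ^ n) 4]
  split_ifs with h
  · subst h; norm_num
  · have h4 := geom_sum_mul z 4
    rw [hz, sub_self] at h4
    rcases mul_eq_zero.mp h4 with h1 | h2
    · exact h1
    · exact absurd (sub_eq_zero.mp h2) h

lemma indicator_iff {d : ℕ} (a b c e : Fin d) :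
    (∀ x : Fin d, ((if a = x then 1 else 0) + (if e = x then 1 else 0) : ℕ)
        = (if b = x then 1 else 0) + (if c = x then 1 else 0)) ↔
      ((a = b ∧ c = e) ∨ (a = c ∧ b = e)) := by
  constructor
  · intro h
    by_cases hab : a = b
    · subst hab
      left; refine ⟨rfl, ?_⟩
      have he := h e
      by_cases hce : c = e
      · exact hce
      · by_cases hae : a = e <;> simp [hae, hce] at he
    · right
      have hba : ¬ b = a := fun hh => hab hh.symm
      have ha := h a
      have hca : c = a := by
        by_contra hca
        by_cases hea : e = a <;> simp [hba, hca, hea] at ha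
      have hea : ¬ e = a := by
        intro hea; simp [hba, hca, hea] at ha
      refine ⟨hca.symm, ?_⟩
      have he := h e
      have hae : ¬ a = e := fun hh => hea hh.symm
      have hce : ¬ c = e := by rw [hca]; exact hae
      by_cases hbe : b = e
      · exact hbe
      · exfalso; simp [hae, hce, hbe] at he
  · rintro (⟨rfl, rfl⟩ | ⟨rfl, rfl⟩) x <;> ring

section Char
open Complex

lemma zeq1 (k l : ℕ) (hk : k ≤ 2) (hl : l ≤ 2) :
    ((starRingEnd ℂ) Complex.I ^ k * Complex.I ^ l = 1) ↔ k = l := by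
  interval_cases k <;> interval_cases l <;>
    norm_num [Complex.conj_I, pow_succ, Complex.ext_iff]

def cnt {d : ℕ} (u w : Fin d) (x : Fin d) : ℕ :=
  (if u = x then 1 else 0) + (if w = x then 1 else 0)

lemma cnt_le {d : ℕ} (u w x : Fin d) : cnt u w x ≤ 2 := by
  unfold cnt; split_ifs <;> omega

set_option maxHeartbeats 1000000 in
lemma char {d : ℕ} (a b c e : Fin d) :
    ∑ θ : Fin d → Fin 4,
      (starRingEnd ℂ) (Complex.I ^ (θ a : ℕ)) * Complex.I ^ (θ b : ℕ) *
        Complex.I ^ (θ c : ℕ) * (starRingEnd ℂ) (Complex.I ^ (θ e : ℕ))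
    = (4:ℂ)^d * (((if a = b ∧ c = e then 1 else 0) + (if a = c ∧ b = e then 1 else 0)
        - (if a = b ∧ b = c ∧ c = e then 1 else 0) : ℂ)) := by
  set z : Fin d → ℂ := fun x =>
    (starRingEnd ℂ) Complex.I ^ (cnt a e x) * Complex.I ^ (cnt b c x) with hzdef
  have step1 : ∀ θ : Fin d → Fin 4,
      (starRingEnd ℂ) (Complex.I ^ (θ a : ℕ)) * Complex.I ^ (θ b : ℕ) *
        Complex.I ^ (θ c : ℕ) * (starRingEnd ℂ) (Complex.I ^ (θ e : ℕ))
      = ∏ x : Fin d, z x ^ (θ x : ℕ) := by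
    intro θ
    have h1 : (starRingEnd ℂ) (Complex.I ^ (θ a : ℕ))
        = ∏ x : Fin d, (if a = x then (starRingEnd ℂ) Complex.I ^ (θ x : ℕ) else 1) := by
      rw [Finset.prod_ite_eq]; simp [map_pow]
    have h2 : Complex.I ^ (θ b : ℕ)
        = ∏ x : Fin d, (if b = x then Complex.I ^ (θ x : ℕ) else 1) := by
      rw [Finset.prod_ite_eq]; simp
    have h3 : Complex.I ^ (θ c : ℕ)
        = ∏ x : Fin d, (if c = x then Complex.I ^ (θ x : ℕ) else 1) := by
      rw [Finset.prod_ite_eq]; simp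
    have h4 : (starRingEnd ℂ) (Complex.I ^ (θ e : ℕ))
        = ∏ x : Fin d, (if e = x then (starRingEnd ℂ) Complex.I ^ (θ x : ℕ) else 1) := by
      rw [Finset.prod_ite_eq]; simp [map_pow]
    rw [h1, h2, h3, h4, ← Finset.prod_mul_distrib, ← Finset.prod_mul_distrib,
      ← Finset.prod_mul_distrib]
    refine Finset.prod_congr rfl fun x _ => ?_
    simp only [hzdef, cnt]
    by_cases hax : a = x <;> by_cases hbx : b = x <;> by_cases hcx : c = x <;>
      by_cases hex : e = x <;>
      simp only [hax, hbx, hcx, hex, eq_self_iff_true, if_true, if_false, ite_true,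
        ite_false, not_false_iff] <;> ring
  have step2 : (∑ θ : Fin d → Fin 4, ∏ x : Fin d, z x ^ (θ x : ℕ))
      = ∏ x : Fin d, ∑ t : Fin 4, z x ^ (t : ℕ) :=
    (Fintype.prod_sum (fun (x : Fin d) (t : Fin 4) => z x ^ (t : ℕ))).symm
  have hz4 : ∀ x, z x ^ 4 = 1 := by
    intro x
    simp only [hzdef]
    have hI4 : Complex.I ^ 4 = 1 := by
      rw [show (4:ℕ) = 2*2 from rfl, pow_mul, Complex.I_sq]; norm_num
    rw [mul_pow, ← pow_mul, ← pow_mul, mul_comm (cnt a e x) 4, mul_comm (cnt b c x) 4,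
      pow_mul, pow_mul, Complex.conj_I, Even.neg_pow (by decide : Even 4), hI4]
    simp
  have step3 : (∏ x : Fin d, ∑ t : Fin 4, z x ^ (t : ℕ))
      = ∏ x : Fin d, (if cnt a e x = cnt b c x then (4:ℂ) else 0) := by
    refine Finset.prod_congr rfl fun x _ => ?_
    rw [foursum (z x) (hz4 x)]
    congr 1
    rw [eq_iff_iff]
    exact zeq1 _ _ (cnt_le a e x) (cnt_le b c x)
  rw [Finset.sum_congr rfl fun θ _ => step1 θ, step2, step3]
  by_cases hall : ∀ x, cnt a e x = cnt b c x
  · have hd : (∀ x : Fin d, ((if a = x then 1 else 0) + (if e = x then 1 else 0) : ℕ)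
        = (if b = x then 1 else 0) + (if c = x then 1 else 0)) := hall
    have hdisj := (indicator_iff a b c e).mp hd
    have hprod : (∏ x : Fin d, (if cnt a e x = cnt b c x then (4:ℂ) else 0)) = 4 ^ d := by
      rw [Finset.prod_congr rfl fun x _ => if_pos (hall x)]
      simp
    rw [hprod]
    rcases hdisj with ⟨hab, hce⟩ | ⟨hac, hbe⟩
    · by_cases hbc : b = c
      · simp [hab, hce, hbc, ← hab, hbc ▸ hce]
      · have : ¬ (a = c ∧ b = e) := by
          rintro ⟨hac, hbe⟩; exact hbc (hab.symm.trans hac)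
        simp [hab, hce, this, hbc]
    · by_cases hab2 : a = b
      · have hbc : b = c := hab2.symm.trans hac
        simp [hab2, hac, hbe, hbc, hbc ▸ hbe]
      · have h3 : ¬ (a = b ∧ b = c ∧ c = e) := fun h => hab2 h.1
        have hce : ¬ c = e := fun h => hab2 (hac.trans (h.trans hbe.symm))
        simp [hac, hbe, hab2, h3, hce]
  · push_neg at hall
    obtain ⟨x0, hx0⟩ := hall
    rw [Finset.prod_eq_zero (Finset.mem_univ x0)
      (show (if cnt a e x0 = cnt b c x0 then (4:ℂ) else 0) = 0 from if_neg hx0)]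
    have hd : ¬ ((a = b ∧ c = e) ∨ (a = c ∧ b = e)) := by
      intro hdisj
      exact (not_forall.mpr ⟨x0, hx0⟩) ((indicator_iff a b c e).mpr hdisj)
    rw [not_or] at hd
    have h1 : ¬ (a = b ∧ c = e) := hd.1
    have h2 : ¬ (a = c ∧ b = e) := hd.2
    have h3 : ¬ (a = b ∧ b = c ∧ c = e) := by
      rintro ⟨hab, hbc, hce⟩; exact h1 ⟨hab, hce⟩
    simp [h1, h2, h3]
end Char

open Matrix

/-- index set for the measure-and-prepare decomposition -/
abbrev Idx (d : ℕ) : Type := (Fin d → Fin 4) ⊕ Fin d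

def vv {d : ℕ} : Idx d → Fin d → ℂ
  | Sum.inl θ => fun j => Complex.I ^ (θ j : ℕ)
  | Sum.inr i => fun j => if i = j then 1 else 0

def wgt {d : ℕ} : Idx d → ℝ := Sum.elim (fun _ => ((4:ℝ)^d)⁻¹) (fun _ => 1)

def nrm {d : ℕ} : Idx d → ℝ := Sum.elim (fun _ => d) (fun _ => 1)

def quad {d : ℕ} (v : Fin d → ℂ) (σ : Matrix (Fin d) (Fin d) ℂ) : ℂ :=
  star v ⬝ᵥ σ.mulVec v

def PP {d : ℕ} (v : Fin d → ℂ) : Matrix (Fin d) (Fin d) ℂ :=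
  Matrix.vecMulVec v (star v)

lemma wgt_nonneg {d : ℕ} (m : Idx d) : 0 ≤ wgt m := by
  rcases m with θ | i <;> simp [wgt] <;> positivity

lemma nrm_nonneg {d : ℕ} (m : Idx d) : 0 ≤ nrm m := by
  rcases m with θ | i <;> simp [nrm]

lemma star_indicator {d : ℕ} (i a : Fin d) :
    star (if i = a then (1:ℂ) else 0) = if i = a then 1 else 0 := by
  split_ifs <;> simp

lemma inds {d : ℕ} (σ : Matrix (Fin d) (Fin d) ℂ) (c e : Fin d) :
    ∑ a, ∑ b, σ a b * (((if a = b ∧ c = e then 1 else 0) + (if a = c ∧ b = e then 1 else 0)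
      - (if a = b ∧ b = c ∧ c = e then 1 else 0) : ℂ))
    = σ c e + (if c = e then σ.trace - σ c c else 0) := by
  have expand : ∀ a b : Fin d, σ a b * (((if a = b ∧ c = e then 1 else 0)
      + (if a = c ∧ b = e then 1 else 0)
      - (if a = b ∧ b = c ∧ c = e then 1 else 0) : ℂ))
      = (if a = b ∧ c = e then σ a b else 0) + (if a = c ∧ b = e then σ a b else 0)
        - (if a = b ∧ b = c ∧ c = e then σ a b else 0) := by
    intro a b; split_ifs <;> ring
  rw [Finset.sum_congr rfl fun a _ => Finset.sum_congr rfl fun b _ => expand a b]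
  simp only [Finset.sum_add_distrib, Finset.sum_sub_distrib]
  have T2 : ∑ a : Fin d, ∑ b : Fin d, (if a = c ∧ b = e then σ a b else 0) = σ c e := by
    rw [Finset.sum_eq_single_of_mem c (Finset.mem_univ c)]
    · rw [Finset.sum_eq_single_of_mem e (Finset.mem_univ e)]
      · simp
      · intro b _ hb; simp [hb]
    · intro a _ ha; simp [ha]
  rw [T2]
  by_cases hce : c = e
  · subst hce
    have T1 : ∑ a : Fin d, ∑ b : Fin d, (if a = b ∧ c = c then σ a b else 0) = σ.trace := by
      rw [Matrix.trace]
      refine Finset.sum_congr rfl fun a _ => ?_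
      rw [Finset.sum_eq_single_of_mem a (Finset.mem_univ a)]
      · simp [Matrix.diag]
      · intro b _ hb; simp [Ne.symm hb]
    have T3 : ∑ a : Fin d, ∑ b : Fin d, (if a = b ∧ b = c ∧ c = c then σ a b else 0)
        = σ c c := by
      rw [Finset.sum_eq_single_of_mem c (Finset.mem_univ c)]
      · rw [Finset.sum_eq_single_of_mem c (Finset.mem_univ c)]
        · simp
        · intro b _ hb; simp [Ne.symm hb]
      · intro a _ ha
        rw [Finset.sum_eq_zero]
        intro b _
        by_cases hab : a = b
        · subst hab; simp [ha]
        · simp [hab]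
    rw [T1, T3]
    simp
  · have T1 : ∑ a : Fin d, ∑ b : Fin d, (if a = b ∧ c = e then σ a b else 0) = 0 := by
      refine Finset.sum_eq_zero fun a _ => Finset.sum_eq_zero fun b _ => ?_
      simp [hce]
    have T3 : ∑ a : Fin d, ∑ b : Fin d, (if a = b ∧ b = c ∧ c = e then σ a b else 0) = 0 := by
      refine Finset.sum_eq_zero fun a _ => Finset.sum_eq_zero fun b _ => ?_
      simp [hce]
    rw [T1, T3]
    simp [hce]

set_option maxHeartbeats 1000000 in
/-- the key weighted 2-design-type identity -/
lemma key {d : ℕ} (σ : Matrix (Fin d) (Fin d) ℂ) :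
    ∑ m : Idx d, ((wgt m : ℝ) : ℂ) • (quad (vv m) σ • PP (vv m)) = σ + σ.trace • 1 := by
  ext c e
  simp only [Matrix.sum_apply, Matrix.smul_apply, smul_eq_mul, Matrix.add_apply,
    Matrix.one_apply, mul_ite, mul_one, mul_zero]
  rw [Fintype.sum_sum_type]
  have hinr : ∑ i : Fin d, ((wgt (Sum.inr i : Idx d) : ℝ) : ℂ) *
      (quad (vv (Sum.inr i : Idx d)) σ * PP (vv (Sum.inr i : Idx d)) c e)
      = if c = e then σ c c else 0 := by
    simp only [wgt, vv, PP, quad, Sum.elim_inr, Complex.ofReal_one, one_mul,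
      Matrix.vecMulVec_apply, dotProduct, Matrix.mulVec, Pi.star_apply,
      star_indicator]
    simp only [ite_mul, one_mul, zero_mul, mul_ite, mul_one, mul_zero,
      Finset.sum_ite_eq, Finset.mem_univ, if_true]
    by_cases hce : c = e
    · subst hce
      rw [Finset.sum_eq_single_of_mem c (Finset.mem_univ c)]
      · simp
      · intro i _ hic; simp [hic]
    · rw [Finset.sum_eq_zero]
      · simp [hce]
      · intro i _
        by_cases hic : i = c
        · by_cases hie : i = e
          · exact absurd (hic ▸ hie) hce
          · simp [hie]
        · simp [hic]
  have hinl : ∑ θ : Fin d → Fin 4, ((wgt (Sum.inl θ : Idx d) : ℝ) : ℂ) *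
      (quad (vv (Sum.inl θ : Idx d)) σ * PP (vv (Sum.inl θ : Idx d)) c e)
      = σ c e + (if c = e then σ.trace - σ c c else 0) := by
    have hw : ∀ θ : Fin d → Fin 4, ((wgt (Sum.inl θ : Idx d) : ℝ) : ℂ) = ((4:ℂ)^d)⁻¹ := by
      intro θ; simp [wgt]
    have h4 : ((4:ℂ)^d) ≠ 0 := by positivity
    calc ∑ θ : Fin d → Fin 4, ((wgt (Sum.inl θ : Idx d) : ℝ) : ℂ) *
          (quad (vv (Sum.inl θ : Idx d)) σ * PP (vv (Sum.inl θ : Idx d)) c e)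
        = ((4:ℂ)^d)⁻¹ * ∑ θ : Fin d → Fin 4,
            (quad (vv (Sum.inl θ : Idx d)) σ * PP (vv (Sum.inl θ : Idx d)) c e) := by
          rw [Finset.mul_sum]
          exact Finset.sum_congr rfl fun θ _ => by rw [hw]
      _ = ((4:ℂ)^d)⁻¹ * ∑ θ : Fin d → Fin 4, ∑ a, ∑ b, σ a b *
            ((starRingEnd ℂ) (Complex.I ^ (θ a : ℕ)) * Complex.I ^ (θ b : ℕ) *
              Complex.I ^ (θ c : ℕ) * (starRingEnd ℂ) (Complex.I ^ (θ e : ℕ))) := by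
          congr 1
          refine Finset.sum_congr rfl fun θ _ => ?_
          simp only [quad, PP, vv, Matrix.vecMulVec_apply, dotProduct,
            Matrix.mulVec, Pi.star_apply, RCLike.star_def]
          rw [Finset.sum_mul]
          refine Finset.sum_congr rfl fun a _ => ?_
          rw [Finset.mul_sum, Finset.sum_mul]
          refine Finset.sum_congr rfl fun b _ => ?_
          ring
      _ = ((4:ℂ)^d)⁻¹ * ∑ a, ∑ b, σ a b *
            ∑ θ : Fin d → Fin 4,
              ((starRingEnd ℂ) (Complex.I ^ (θ a : ℕ)) * Complex.I ^ (θ b : ℕ) *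
                Complex.I ^ (θ c : ℕ) * (starRingEnd ℂ) (Complex.I ^ (θ e : ℕ))) := by
          congr 1
          rw [Finset.sum_comm]
          refine Finset.sum_congr rfl fun a _ => ?_
          rw [Finset.sum_comm]
          refine Finset.sum_congr rfl fun b _ => ?_
          rw [Finset.mul_sum]
      _ = ((4:ℂ)^d)⁻¹ * ((4:ℂ)^d * ∑ a, ∑ b, σ a b *
            (((if a = b ∧ c = e then 1 else 0) + (if a = c ∧ b = e then 1 else 0)
              - (if a = b ∧ b = c ∧ c = e then 1 else 0) : ℂ))) := by
          congr 1
          rw [Finset.mul_sum]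
          refine Finset.sum_congr rfl fun a _ => ?_
          rw [Finset.mul_sum]
          refine Finset.sum_congr rfl fun b _ => ?_
          rw [char a b c e]
          ring
      _ = σ c e + (if c = e then σ.trace - σ c c else 0) := by
          rw [inds σ c e, ← mul_assoc, inv_mul_cancel₀ h4, one_mul]
  rw [hinl, hinr]
  by_cases hce : c = e <;> simp [hce] <;> ring

section Helpers

variable {n : Type*} [Fintype n] [DecidableEq n]

lemma smul_psd (r : ℝ) (hr : 0 ≤ r) {M : Matrix n n ℂ} (h : M.PosSemidef) :
    ((r : ℂ) • M).PosSemidef := by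
  rw [Matrix.posSemidef_iff_dotProduct_mulVec]
  constructor
  · unfold Matrix.IsHermitian
    rw [Matrix.conjTranspose_smul, h.1.eq]
    congr 1
    simp [Complex.ext_iff]
  · intro x
    rw [Matrix.smul_mulVec, dotProduct_smul, smul_eq_mul]
    exact mul_nonneg (by rw [Complex.zero_le_real]; exact hr) (h.dotProduct_mulVec_nonneg x)

lemma psd_diag_nonneg {M : Matrix n n ℂ} (h : M.PosSemidef) (i : n) :
    0 ≤ M i i := by
  have := h.dotProduct_mulVec_nonneg (Pi.single i 1)
  simpa [dotProduct, Matrix.mulVec, Pi.single_apply, Finset.sum_ite_eq,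
    dotProduct_single] using this

lemma psd_trace_real {M : Matrix n n ℂ} (h : M.PosSemidef) :
    M.trace = ((M.trace.re : ℝ) : ℂ) ∧ 0 ≤ M.trace.re := by
  have hd := fun i => (Complex.nonneg_iff.mp (psd_diag_nonneg h i))
  have him : M.trace.im = 0 := by
    rw [Matrix.trace]
    rw [Complex.im_sum]
    exact Finset.sum_eq_zero fun i _ => ((hd i).2).symm
  constructor
  · exact (Complex.ext (by simp) (by simp [him])).symm
  · rw [Matrix.trace, Complex.re_sum]
    exact Finset.sum_nonneg fun i _ => (hd i).1

lemma psd_trace_zero {M : Matrix n n ℂ} (h : M.PosSemidef) (h0 : M.trace = 0) :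
    M = 0 := by
  have hU := (Matrix.mem_unitaryGroup_iff').mp (h.1.eigenvectorUnitary).2
  have htr : M.trace = ∑ i, ((h.1.eigenvalues i : ℝ) : ℂ) := by
    conv_lhs => rw [h.1.spectral_theorem, Unitary.conjStarAlgAut_apply]
    rw [Matrix.trace_mul_cycle, hU, Matrix.one_mul, Matrix.trace_diagonal]
    rfl
  have hsum : ∑ i, h.1.eigenvalues i = 0 := by
    have : ((∑ i, h.1.eigenvalues i : ℝ) : ℂ) = 0 := by
      push_cast
      rw [← htr, h0]
    exact_mod_cast this
  have hzero : ∀ i ∈ Finset.univ, h.1.eigenvalues i = 0 :=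
    (Finset.sum_eq_zero_iff_of_nonneg fun i _ => h.eigenvalues_nonneg i).mp hsum
  have hdiag : Matrix.diagonal (RCLike.ofReal ∘ h.1.eigenvalues : n → ℂ) = 0 := by
    ext i j
    rcases eq_or_ne i j with rfl | hij
    · simp [hzero i (Finset.mem_univ i)]
    · simp [Matrix.diagonal_apply_ne _ hij]
  have := h.1.spectral_theorem
  rw [hdiag, Unitary.conjStarAlgAut_apply, Matrix.mul_zero, Matrix.zero_mul] at this
  exact this

end Helpers

section PnTau

variable {d : ℕ}

lemma PP_psd (m : Idx d) : (PP (vv m)).PosSemidef := by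
  rw [PP, Matrix.vecMulVec_eq (ι := Unit), ← Matrix.conjTranspose_replicateCol]
  exact Matrix.posSemidef_self_mul_conjTranspose _

lemma vv_dot (m : Idx d) : star (vv m) ⬝ᵥ vv m = ((nrm m : ℝ) : ℂ) := by
  rcases m with θ | i
  · simp only [vv, nrm, Sum.elim_inl, dotProduct, Pi.star_apply, RCLike.star_def]
    have h1 : ∀ j : Fin d, (starRingEnd ℂ) (Complex.I ^ (θ j : ℕ)) * Complex.I ^ (θ j : ℕ)
        = 1 := by
      intro j
      rw [← Complex.normSq_eq_conj_mul_self, map_pow, Complex.normSq_I,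
        one_pow, Complex.ofReal_one]
    rw [Finset.sum_congr rfl fun j _ => h1 j, Finset.sum_const, Finset.card_univ,
      Fintype.card_fin]
    simp
  · simp only [vv, nrm, Sum.elim_inr, dotProduct, Pi.star_apply, star_indicator]
    rw [Finset.sum_eq_single_of_mem i (Finset.mem_univ i)]
    · simp
    · intro b _ hb; simp [Ne.symm hb]

lemma PP_trace (m : Idx d) : (PP (vv m)).trace = ((nrm m : ℝ) : ℂ) := by
  rw [← vv_dot m, Matrix.trace, dotProduct]
  refine Finset.sum_congr rfl fun j _ => ?_
  simp [PP, Matrix.diag, Matrix.vecMulVec_apply]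
  ring

lemma PP_mul_PP (m : Idx d) :
    PP (vv m) * PP (vv m) = ((nrm m : ℝ) : ℂ) • PP (vv m) := by
  rw [← vv_dot m]
  ext i j
  simp only [Matrix.mul_apply, PP, Matrix.vecMulVec_apply, Matrix.smul_apply,
    dotProduct, smul_eq_mul, Finset.sum_mul]
  refine Finset.sum_congr rfl fun k _ => ?_
  ring

lemma nrm_pos (hd : 1 ≤ d) (m : Idx d) : 0 < nrm m := by
  rcases m with θ | i <;> simp [nrm]
  omega

/-- normalized rank-one projection -/
def Pn (m : Idx d) : Matrix (Fin d) (Fin d) ℂ := (((nrm m)⁻¹ : ℝ) : ℂ) • PP (vv m)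

lemma Pn_psd (m : Idx d) : (Pn m).PosSemidef :=
  smul_psd _ (inv_nonneg.mpr (nrm_nonneg m)) (PP_psd m)

lemma Pn_trace (hd : 1 ≤ d) (m : Idx d) : (Pn m).trace = 1 := by
  rw [Pn, Matrix.trace_smul, PP_trace, smul_eq_mul]
  rw [← Complex.ofReal_mul, inv_mul_cancel₀ (ne_of_gt (nrm_pos hd m))]
  simp

lemma Pn_idem (hd : 1 ≤ d) (m : Idx d) : Pn m * Pn m = Pn m := by
  rw [Pn, Matrix.smul_mul, Matrix.mul_smul, PP_mul_PP, smul_smul, smul_smul]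
  congr 1
  rw [← Complex.ofReal_mul, ← Complex.ofReal_mul]
  congr 1
  field_simp

lemma one_sub_Pn_psd (hd : 1 ≤ d) (m : Idx d) : ((1 : Matrix (Fin d) (Fin d) ℂ) - Pn m).PosSemidef := by
  have hherm : ((1 : Matrix (Fin d) (Fin d) ℂ) - Pn m)ᴴ = 1 - Pn m := by
    rw [Matrix.conjTranspose_sub, Matrix.conjTranspose_one, (Pn_psd m).1.eq]
  have hidem : ((1 : Matrix (Fin d) (Fin d) ℂ) - Pn m) * (1 - Pn m) = 1 - Pn m := by
    rw [Matrix.sub_mul, Matrix.one_mul, Matrix.mul_sub, Matrix.mul_one, Pn_idem hd m]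
    abel
  have : (1 : Matrix (Fin d) (Fin d) ℂ) - Pn m
      = ((1 : Matrix (Fin d) (Fin d) ℂ) - Pn m)ᴴ * (1 - Pn m) := by
    rw [hherm, hidem]
  rw [this]
  exact Matrix.posSemidef_conjTranspose_mul_self _

/-- the prepared state -/
def tau (t : ℝ) (m : Idx d) : Matrix (Fin d) (Fin d) ℂ :=
  ((t : ℝ) : ℂ) • Pn m + (((1 - t) / ((d:ℝ) - 1) : ℝ) : ℂ) • (1 - Pn m)

lemma tau_psd (hd : 2 ≤ d) {t : ℝ} (ht0 : 0 ≤ t) (ht1 : t ≤ 1) (m : Idx d) :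
    (tau t m).PosSemidef := by
  refine Matrix.PosSemidef.add (smul_psd _ ht0 (Pn_psd m)) (smul_psd _ ?_ (one_sub_Pn_psd (by omega) m))
  have hpos : (0:ℝ) < (d:ℝ) - 1 := by
    have : (2:ℝ) ≤ (d:ℝ) := by exact_mod_cast hd
    linarith
  exact div_nonneg (by linarith) (le_of_lt hpos)

lemma tau_trace (hd : 2 ≤ d) (t : ℝ) (m : Idx d) : (tau t m).trace = 1 := by
  have hd1 : ((d:ℝ) - 1) ≠ 0 := by
    have : (2:ℝ) ≤ (d:ℝ) := by exact_mod_cast hd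
    linarith
  rw [tau, Matrix.trace_add, Matrix.trace_smul, Matrix.trace_smul, Matrix.trace_sub,
    Matrix.trace_one, Pn_trace (by omega) m]
  simp only [smul_eq_mul, mul_one]
  have h2 : (((1 - t) / ((d:ℝ) - 1) : ℝ) : ℂ) * ((Fintype.card (Fin d) : ℂ) - 1)
      = 1 - (t:ℂ) := by
    rw [Fintype.card_fin]
    have h3 : ((d:ℂ) - 1) = (((d:ℝ) - 1 : ℝ) : ℂ) := by push_cast; ring
    rw [h3, ← Complex.ofReal_mul, div_mul_cancel₀ _ hd1, Complex.ofReal_sub,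
      Complex.ofReal_one]
  rw [h2]
  ring

end PnTau

section Rep

variable {d : ℕ}

/-- measurement coefficient -/
def cc (m : Idx d) : ℝ := wgt m * nrm m / (d + 1)

lemma cc_nonneg (m : Idx d) : 0 ≤ cc m :=
  div_nonneg (mul_nonneg (wgt_nonneg m) (nrm_nonneg m)) (by positivity)

lemma traceS (σ : Matrix (Fin d) (Fin d) ℂ) :
    ∑ m : Idx d, ((wgt m : ℝ) : ℂ) * quad (vv m) σ * ((nrm m : ℝ) : ℂ)
      = ((d:ℂ) + 1) * σ.trace := by
  have h := congrArg Matrix.trace (key σ)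
  rw [Matrix.trace_sum, Matrix.trace_add, Matrix.trace_smul, Matrix.trace_one] at h
  have hterm : ∀ m : Idx d, (((wgt m : ℝ) : ℂ) • (quad (vv m) σ • PP (vv m))).trace
      = ((wgt m : ℝ) : ℂ) * quad (vv m) σ * ((nrm m : ℝ) : ℂ) := by
    intro m
    rw [Matrix.trace_smul, Matrix.trace_smul, PP_trace]
    simp only [smul_eq_mul]
    ring
  rw [Finset.sum_congr rfl fun m _ => hterm m] at h
  rw [h, Fintype.card_fin]
  simp only [smul_eq_mul]
  ring

set_option maxHeartbeats 1000000 in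
lemma rep (hd : 2 ≤ d) (a t : ℝ) (htd : t * d = a * ((d:ℝ)^2 - 1) + 1)
    (σ : Matrix (Fin d) (Fin d) ℂ) :
    depolarizing d a σ
      = ∑ m : Idx d, (((cc m : ℝ) : ℂ) * quad (vv m) σ) • tau t m := by
  have hd2 : (2:ℝ) ≤ (d:ℝ) := by exact_mod_cast hd
  have hdp1 : (d:ℝ) + 1 ≠ 0 := by linarith
  have hdm1 : (d:ℝ) - 1 ≠ 0 := by linarith
  have hd0 : (d:ℝ) ≠ 0 := by linarith
  have hd2m : (d:ℝ)^2 - 1 ≠ 0 := by nlinarith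
  have hnrm : ∀ m : Idx d, nrm m ≠ 0 := fun m => ne_of_gt (nrm_pos (by omega) m)
  set α : ℝ := t / ((d:ℝ) + 1) with hα
  set β : ℝ := (1 - t) / ((d:ℝ)^2 - 1) with hβ
  set B : ℝ := (1 - t) / ((d:ℝ) - 1) with hB
  have ha : a = (t * d - 1) / ((d:ℝ)^2 - 1) := by
    field_simp
    linarith [htd]
  have f1 : ∀ m : Idx d, cc m * t * (nrm m)⁻¹ = α * wgt m := by
    intro m; rw [cc, hα]; field_simp [hnrm m]
  have f2 : ∀ m : Idx d, cc m * B = β * (wgt m * nrm m) := by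
    intro m; rw [cc, hβ, hB]; field_simp [hnrm m]; ring
  have f3 : ∀ m : Idx d, cc m * B * (nrm m)⁻¹ = β * wgt m := by
    intro m; rw [cc, hβ, hB]; field_simp [hnrm m]; ring
  have g1 : ∀ m : Idx d, ((cc m : ℝ):ℂ) * ((t:ℝ):ℂ) * (((nrm m)⁻¹ : ℝ):ℂ)
      = ((α:ℝ):ℂ) * ((wgt m : ℝ):ℂ) := fun m => by exact_mod_cast congrArg Complex.ofReal (f1 m)
  have g2 : ∀ m : Idx d, ((cc m : ℝ):ℂ) * ((B:ℝ):ℂ)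
      = ((β:ℝ):ℂ) * (((wgt m : ℝ):ℂ) * ((nrm m : ℝ):ℂ)) := fun m => by
    exact_mod_cast congrArg Complex.ofReal (f2 m)
  have g3 : ∀ m : Idx d, ((cc m : ℝ):ℂ) * ((B:ℝ):ℂ) * (((nrm m)⁻¹ : ℝ):ℂ)
      = ((β:ℝ):ℂ) * ((wgt m : ℝ):ℂ) := fun m => by
    exact_mod_cast congrArg Complex.ofReal (f3 m)
  have summand_eq : ∀ m : Idx d, (((cc m : ℝ) : ℂ) * quad (vv m) σ) • tau t m
      = ((α:ℝ):ℂ) • (((wgt m : ℝ):ℂ) • (quad (vv m) σ • PP (vv m)))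
        + ((β:ℝ):ℂ) • ((((wgt m : ℝ):ℂ) * quad (vv m) σ * ((nrm m : ℝ):ℂ)) • (1 : Matrix (Fin d) (Fin d) ℂ))
        - ((β:ℝ):ℂ) • (((wgt m : ℝ):ℂ) • (quad (vv m) σ • PP (vv m))) := by
    intro m
    ext i j
    simp only [tau, Pn, Matrix.smul_apply, Matrix.add_apply, Matrix.sub_apply,
      Matrix.one_apply, smul_eq_mul]
    by_cases hij : i = j
    · simp only [hij, eq_self_iff_true, if_true]
      linear_combination (quad (vv m) σ * PP (vv m) j j) * g1 m
        - (quad (vv m) σ * PP (vv m) j j) * g3 m + quad (vv m) σ * g2 m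
    · simp only [if_neg hij]
      linear_combination (quad (vv m) σ * PP (vv m) i j) * g1 m
        - (quad (vv m) σ * PP (vv m) i j) * g3 m
  rw [Finset.sum_congr rfl fun m _ => summand_eq m]
  rw [Finset.sum_sub_distrib, Finset.sum_add_distrib, ← Finset.smul_sum, ← Finset.smul_sum,
    ← Finset.smul_sum]
  have hsum1 : ∑ m : Idx d, (((wgt m : ℝ):ℂ) * quad (vv m) σ * ((nrm m : ℝ):ℂ)) • (1 : Matrix (Fin d) (Fin d) ℂ)
      = (((d:ℂ) + 1) * σ.trace) • (1 : Matrix (Fin d) (Fin d) ℂ) := by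
    rw [← Finset.sum_smul, traceS σ]
  rw [hsum1, key σ]
  have h1 : ((α:ℝ):ℂ) - ((β:ℝ):ℂ) = ((a:ℝ):ℂ) := by
    have : α - β = a := by rw [hα, hβ, ha]; field_simp; ring
    exact_mod_cast congrArg Complex.ofReal this
  have h2 : ((α:ℝ):ℂ) + (d:ℂ) * ((β:ℝ):ℂ) = (((1:ℝ) - a : ℝ):ℂ) / (d:ℂ) := by
    have hr : α + (d:ℝ) * β = (1 - a) / d := by rw [hα, hβ, ha]; field_simp; ring
    exact_mod_cast congrArg Complex.ofReal hr
  ext i j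
  simp only [depolarizing, Matrix.add_apply, Matrix.smul_apply, Matrix.sub_apply,
    Matrix.one_apply, smul_eq_mul]
  by_cases hij : i = j
  · simp only [hij, eq_self_iff_true, if_true]
    linear_combination -(σ j j * h1) - σ.trace * h2
  · simp only [if_neg hij]
    linear_combination -(σ i j * h1)

end Rep

section Tensor

variable {d : ℕ}

/-- block of a bipartite matrix -/
def blk (ρ : Matrix (Fin d × Fin d) (Fin d × Fin d) ℂ) (i k : Fin d) :
    Matrix (Fin d) (Fin d) ℂ :=
  Matrix.of fun j l => ρ (i, j) (k, l)

/-- conditional (unnormalized) output state on the first factor -/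
def AA (ρ : Matrix (Fin d × Fin d) (Fin d × Fin d) ℂ) (m : Idx d) :
    Matrix (Fin d) (Fin d) ℂ :=
  Matrix.of fun i k => ((cc m : ℝ) : ℂ) * quad (vv m) (blk ρ i k)

/-- isometry-like matrix used to show positivity of `AA` -/
def Wm (m : Idx d) : Matrix (Fin d × Fin d) (Fin d) ℂ :=
  Matrix.of fun p k => if p.1 = k then vv m p.2 else 0

lemma AA_eq (ρ : Matrix (Fin d × Fin d) (Fin d × Fin d) ℂ) (m : Idx d) :
    AA ρ m = ((cc m : ℝ) : ℂ) • ((Wm m)ᴴ * ρ * (Wm m)) := by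
  ext i k
  simp only [AA, Matrix.of_apply, Matrix.smul_apply, smul_eq_mul]
  congr 1
  simp only [quad, blk, dotProduct, Matrix.mulVec, Matrix.mul_apply,
    Matrix.conjTranspose_apply, Wm, Matrix.of_apply, Pi.star_apply,
    Fintype.sum_prod_type]
  have hy : ∀ y : Fin d, (∑ x1 : Fin d, ∑ x2 : Fin d,
      star (if x1 = i then vv m x2 else 0) * ρ (x1, x2) (k, y)) *
        (if k = k then vv m y else 0)
      = ∑ x2 : Fin d, star (vv m x2) * ρ (i, x2) (k, y) * vv m y := by
    intro y
    rw [if_pos rfl, Finset.sum_eq_single_of_mem i (Finset.mem_univ i)]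
    · rw [Finset.sum_mul]
      refine Finset.sum_congr rfl fun x2 _ => ?_
      rw [if_pos rfl]
    · intro x _ hx
      exact Finset.sum_eq_zero fun y2 _ => by simp [hx]
  trans (∑ y : Fin d, ∑ x2 : Fin d, star (vv m x2) * ρ (i, x2) (k, y) * vv m y)
  · rw [Finset.sum_comm]
    refine Finset.sum_congr rfl fun a _ => ?_
    rw [Finset.mul_sum]
    refine Finset.sum_congr rfl fun b _ => ?_
    ring
  · symm
    rw [Finset.sum_eq_single_of_mem k (Finset.mem_univ k)]
    · exact Finset.sum_congr rfl fun y _ => hy y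
    · intro x _ hx
      exact Finset.sum_eq_zero fun y _ => by simp [hx]

lemma AA_psd {ρ : Matrix (Fin d × Fin d) (Fin d × Fin d) ℂ} (hρ : ρ.PosSemidef)
    (m : Idx d) : (AA ρ m).PosSemidef := by
  rw [AA_eq]
  exact smul_psd _ (cc_nonneg m) (hρ.conjTranspose_mul_mul_same (Wm m))

lemma ccTrace (hd : 2 ≤ d) (σ : Matrix (Fin d) (Fin d) ℂ) :
    ∑ m : Idx d, ((cc m : ℝ) : ℂ) * quad (vv m) σ = σ.trace := by
  have hdr : ((d:ℝ) + 1) ≠ 0 := by positivity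
  have hdc : ((d:ℂ) + 1) ≠ 0 := by
    have : ((d:ℂ) + 1) = (((d:ℝ) + 1 : ℝ) : ℂ) := by push_cast; ring
    rw [this]
    exact_mod_cast Complex.ofReal_ne_zero.mpr hdr
  have hterm : ∀ m : Idx d, ((cc m : ℝ) : ℂ) * quad (vv m) σ
      = ((d:ℂ) + 1)⁻¹ * (((wgt m : ℝ) : ℂ) * quad (vv m) σ * ((nrm m : ℝ) : ℂ)) := by
    intro m
    rw [cc]
    push_cast
    field_simp
  rw [Finset.sum_congr rfl fun m _ => hterm m, ← Finset.mul_sum, traceS σ, ← mul_assoc,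
    inv_mul_cancel₀ hdc, one_mul]

lemma blk_trace (ρ : Matrix (Fin d × Fin d) (Fin d × Fin d) ℂ) :
    ∑ i : Fin d, (blk ρ i i).trace = ρ.trace := by
  rw [Matrix.trace, Fintype.sum_prod_type]
  refine Finset.sum_congr rfl fun i _ => ?_
  simp [Matrix.trace, Matrix.diag, blk]

lemma AA_trace_sum (hd : 2 ≤ d) (ρ : Matrix (Fin d × Fin d) (Fin d × Fin d) ℂ) :
    ∑ m : Idx d, (AA ρ m).trace = ρ.trace := by
  have h1 : ∀ m : Idx d, (AA ρ m).trace
      = ∑ i : Fin d, ((cc m : ℝ) : ℂ) * quad (vv m) (blk ρ i i) := by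
    intro m; rw [Matrix.trace]; rfl
  rw [Finset.sum_congr rfl fun m _ => h1 m, Finset.sum_comm]
  rw [Finset.sum_congr rfl fun i _ => ccTrace hd (blk ρ i i)]
  exact blk_trace ρ

lemma kron_sum_right {I : Type*} [Fintype I] (E : Matrix (Fin d) (Fin d) ℂ)
    (f : I → Matrix (Fin d) (Fin d) ℂ) :
    E ⊗ₖ (∑ x, f x) = ∑ x, E ⊗ₖ f x := by
  ext ⟨i, j⟩ ⟨k, l⟩
  simp [Matrix.kroneckerMap_apply, Matrix.sum_apply, Finset.mul_sum]

lemma blocksum (M B : Matrix (Fin d) (Fin d) ℂ) :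
    ∑ i : Fin d, ∑ k : Fin d, (M i k) • ((Matrix.single i k (1:ℂ)) ⊗ₖ B) = M ⊗ₖ B := by
  ext ⟨i, j⟩ ⟨k, l⟩
  simp only [Matrix.sum_apply, Matrix.smul_apply, Matrix.kroneckerMap_apply,
    Matrix.single_apply, smul_eq_mul]
  rw [Finset.sum_eq_single_of_mem i (Finset.mem_univ i)]
  · rw [Finset.sum_eq_single_of_mem k (Finset.mem_univ k)]
    · simp
    · intro x _ hx; simp [hx]
  · intro x _ hx
    apply Finset.sum_eq_zero
    intro q _
    simp [hx]

set_option maxHeartbeats 1000000 in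
lemma tensor_eq (hd : 2 ≤ d) (a t : ℝ) (htd : t * d = a * ((d:ℝ)^2 - 1) + 1)
    (ρ : Matrix (Fin d × Fin d) (Fin d × Fin d) ℂ) :
    tensorMap (id : Matrix (Fin d) (Fin d) ℂ → Matrix (Fin d) (Fin d) ℂ)
        (depolarizing d a) ρ
      = ∑ m : Idx d, (AA ρ m) ⊗ₖ tau t m := by
  rw [tensorMap]
  have hstep : ∀ i k : Fin d,
      (id (Matrix.single i k (1:ℂ))) ⊗ₖ (depolarizing d a (Matrix.of fun j l => ρ (i, j) (k, l)))
      = ∑ m : Idx d, (AA ρ m i k) • ((Matrix.single i k (1:ℂ)) ⊗ₖ tau t m) := by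
    intro i k
    rw [id_eq, show (Matrix.of fun j l => ρ (i, j) (k, l)) = blk ρ i k from rfl,
      rep hd a t htd (blk ρ i k), kron_sum_right]
    refine Finset.sum_congr rfl fun m _ => ?_
    rw [Matrix.kronecker_smul]
    rfl
  rw [Finset.sum_congr rfl fun i _ => Finset.sum_congr rfl fun k _ => hstep i k]
  rw [Finset.sum_congr rfl fun i (_ : i ∈ Finset.univ) => Finset.sum_comm, Finset.sum_comm]
  exact Finset.sum_congr rfl fun m _ => blocksum (AA ρ m) (tau t m)

end Tensor

section Assemble

variable {d : ℕ}

/-- probability weights -/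
def pfun (ρ : Matrix (Fin d × Fin d) (Fin d × Fin d) ℂ) (m : Idx d) : ℝ :=
  ((AA ρ m).trace).re

/-- normalized conditional states -/
def sig (ρ : Matrix (Fin d × Fin d) (Fin d × Fin d) ℂ) (m : Idx d) :
    Matrix (Fin d) (Fin d) ℂ :=
  if pfun ρ m = 0 then (((d:ℝ)⁻¹ : ℝ) : ℂ) • 1 else (((pfun ρ m)⁻¹ : ℝ) : ℂ) • AA ρ m

lemma pfun_nonneg {ρ : Matrix (Fin d × Fin d) (Fin d × Fin d) ℂ} (hρ : ρ.PosSemidef)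
    (m : Idx d) : 0 ≤ pfun ρ m :=
  (psd_trace_real (AA_psd hρ m)).2

lemma pfun_sum (hd : 2 ≤ d) {ρ : Matrix (Fin d × Fin d) (Fin d × Fin d) ℂ}
    (hρ : ρ.trace = 1) : ∑ m : Idx d, pfun ρ m = 1 := by
  have : ∑ m : Idx d, pfun ρ m = (∑ m : Idx d, (AA ρ m).trace).re := by
    rw [Complex.re_sum]; rfl
  rw [this, AA_trace_sum hd ρ, hρ, Complex.one_re]

lemma sig_density (hd : 2 ≤ d) {ρ : Matrix (Fin d × Fin d) (Fin d × Fin d) ℂ}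
    (hρ : ρ.PosSemidef) (m : Idx d) : GenDep.IsDensityMatrix (sig ρ m) := by
  have hdc : (d:ℂ) ≠ 0 := by
    simp only [Ne, Nat.cast_eq_zero]
    omega
  rw [sig]
  split_ifs with hz
  · constructor
    · exact smul_psd _ (by positivity) Matrix.PosSemidef.one
    · rw [Matrix.trace_smul, Matrix.trace_one, Fintype.card_fin]
      simp only [smul_eq_mul]
      rw [Complex.ofReal_inv]
      push_cast
      field_simp
  · constructor
    · exact smul_psd _ (inv_nonneg.mpr (pfun_nonneg hρ m)) (AA_psd hρ m)
    · rw [Matrix.trace_smul, smul_eq_mul, (psd_trace_real (AA_psd hρ m)).1]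
      rw [← Complex.ofReal_mul]
      rw [show (pfun ρ m)⁻¹ * ((AA ρ m).trace).re = 1 from ?_]
      · simp
      · rw [show ((AA ρ m).trace).re = pfun ρ m from rfl, inv_mul_cancel₀ hz]

lemma p_smul_sig {ρ : Matrix (Fin d × Fin d) (Fin d × Fin d) ℂ} (hρ : ρ.PosSemidef)
    (t : ℝ) (m : Idx d) :
    ((pfun ρ m : ℝ) : ℂ) • ((sig ρ m) ⊗ₖ tau t m) = (AA ρ m) ⊗ₖ tau t m := by
  rw [sig]
  split_ifs with hz
  · have h0 : AA ρ m = 0 := by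
      refine psd_trace_zero (AA_psd hρ m) ?_
      rw [(psd_trace_real (AA_psd hρ m)).1]
      rw [show ((AA ρ m).trace).re = pfun ρ m from rfl, hz, Complex.ofReal_zero]
    rw [h0, hz, Matrix.zero_kronecker, Complex.ofReal_zero, zero_smul]
  · rw [Matrix.smul_kronecker, smul_smul, ← Complex.ofReal_mul, mul_inv_cancel₀ hz,
      Complex.ofReal_one, one_smul]

end Assemble
end EB


open GenDep in
/-- for `-1/(d²-1) ≤ a ≤ 1/(d+1)` the depolarizing channel is
entanglement breaking: `(id ⊗ Γ_a)(ρ)` is separable for every density matrix `ρ` on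
`ℂ^d ⊗ ℂ^d`. -/
theorem stmt_18 {d : ℕ} (hd : 2 ≤ d) (a : ℝ)
    (ha : -(1 / ((d : ℝ) ^ 2 - 1)) ≤ a) (ha1 : a ≤ 1 / ((d : ℝ) + 1)) :
    ∀ ρ : Matrix (Fin d × Fin d) (Fin d × Fin d) ℂ, IsDensityMatrix ρ →
      ∃ (m : ℕ) (p : Fin m → ℝ) (σ τ : Fin m → Matrix (Fin d) (Fin d) ℂ),
        (∀ i, 0 ≤ p i) ∧ (∑ i, p i = 1) ∧
          (∀ i, IsDensityMatrix (σ i)) ∧ (∀ i, IsDensityMatrix (τ i)) ∧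
          tensorMap (id : Matrix (Fin d) (Fin d) ℂ → Matrix (Fin d) (Fin d) ℂ)
              (depolarizing d a) ρ =
            ∑ i, (p i : ℂ) • (σ i ⊗ₖ τ i) := by
  intro ρ hρ
  have hd2 : (2:ℝ) ≤ (d:ℝ) := by exact_mod_cast hd
  have hd0 : (0:ℝ) < (d:ℝ) := by linarith
  have hdm : (0:ℝ) < (d:ℝ)^2 - 1 := by nlinarith
  set t : ℝ := (a * ((d:ℝ)^2 - 1) + 1) / d with htdef
  have htd : t * d = a * ((d:ℝ)^2 - 1) + 1 := by
    rw [htdef]; field_simp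
  have ht0 : 0 ≤ t := by
    apply div_nonneg _ (le_of_lt hd0)
    have h' := mul_le_mul_of_nonneg_right ha (le_of_lt hdm)
    have h'' : (-(1/((d:ℝ)^2 - 1))) * ((d:ℝ)^2 - 1) = -1 := by field_simp
    linarith
  have ht1 : t ≤ 1 := by
    rw [htdef, div_le_one hd0]
    have h' := mul_le_mul_of_nonneg_right ha1 (le_of_lt hdm)
    have h'' : (1/((d:ℝ)+1)) * ((d:ℝ)^2 - 1) = (d:ℝ) - 1 := by
      field_simp
      ring
    linarith
  classical
  let e : Fin (Fintype.card (EB.Idx d)) ≃ EB.Idx d := (Fintype.equivFin (EB.Idx d)).symm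
  refine ⟨Fintype.card (EB.Idx d), fun i => EB.pfun ρ (e i), fun i => EB.sig ρ (e i),
    fun i => EB.tau t (e i), fun i => EB.pfun_nonneg hρ.1 (e i), ?_, 
    fun i => EB.sig_density hd hρ.1 (e i),
    fun i => ⟨EB.tau_psd hd ht0 ht1 (e i), EB.tau_trace hd t (e i)⟩, ?_⟩
  · rw [Equiv.sum_comp e (fun m => EB.pfun ρ m), EB.pfun_sum hd hρ.2]
  · rw [EB.tensor_eq hd a t htd ρ,
      ← Equiv.sum_comp e (fun m => (EB.AA ρ m) ⊗ₖ EB.tau t m)]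
    exact Finset.sum_congr rfl fun i _ => (EB.p_smul_sig hρ.1 t (e i)).symm
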